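/- arXiv:2604.27055 — 5 statements merged into one kernel-verified Lean document; each statement's English description precedes it below -/
import Mathlib

section
/- For any real r×s matrix A and any natural number α ≥ 1, the sum of the 2α-th powers of the absolute values of the entries of A is bounded by the trace of the α-th power of the Gram matrix: ∑_{i=1}^{r} ∑_{j=1}^{s} |A_{ij}|^{2α} ≤ Tr[(AᵀA)^{α}]. (Since Tr[(AᵀA)^{α}] = ∑_k σ_k(A)^{2α}, this bounds the entrywise ℓ_{2α} norm by the Schatten 2α-norm.) -/
open Matrix BigOperators

section aux

variable {n : ℕ}

open scoped MatrixOrder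

/-- For nonnegative reals, `∑ fᵢ^α ≤ (∑ fᵢ)^α` when `1 ≤ α`. -/
lemma aux_sum_pow_le {ι : Type*} [Fintype ι] (f : ι → ℝ) (hf : ∀ i, 0 ≤ f i)
    {α : ℕ} (hα : 1 ≤ α) : ∑ i, f i ^ α ≤ (∑ i, f i) ^ α := by
  induction α with
  | zero => omega
  | succ m ih =>
    rcases Nat.eq_or_lt_of_le hα with h | h
    · simp [← h]
    · have hm : 1 ≤ m := by omega
      have hS : 0 ≤ ∑ i, f i := Finset.sum_nonneg fun i _ => hf i
      calc ∑ i, f i ^ (m + 1) = ∑ i, f i * f i ^ m := by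
            simp [pow_succ, mul_comm]
        _ ≤ ∑ i, f i * (∑ k, f k) ^ m := by
            refine Finset.sum_le_sum fun i _ => ?_
            exact mul_le_mul_of_nonneg_left
              (pow_le_pow_left₀ (hf i)
                (Finset.single_le_sum (fun k _ => hf k) (Finset.mem_univ i)) m) (hf i)
        _ = (∑ i, f i) * (∑ i, f i) ^ m := by rw [← Finset.sum_mul]
        _ = (∑ i, f i) ^ (m + 1) := by ring

lemma aux_symm {M : Matrix (Fin n) (Fin n) ℝ} (hM : M.PosSemidef) : Mᵀ = M := by
  have := hM.1
  rwa [Matrix.IsHermitian, conjTranspose_eq_transpose_of_trivial] at this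

/-- Diagonal Cauchy–Schwarz for a PSD matrix. -/
lemma aux_cs {M : Matrix (Fin n) (Fin n) ℝ} (hM : M.PosSemidef)
    (C : Matrix (Fin n) (Fin n) ℝ) (j : Fin n) :
    ((M * C) j j) ^ 2 ≤ M j j * ((Cᵀ * M * C) j j) := by
  set N := CFC.sqrt M with hN
  have hNsq : N * N = M := CFC.sqrt_mul_sqrt_self M hM.nonneg
  have hNsymm : Nᵀ = N := aux_symm (CFC.sqrt_nonneg M).posSemidef
  have h1 : (M * C) j j = ∑ l, N j l * (N * C) l j := by
    rw [← hNsq, mul_assoc, Matrix.mul_apply]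
  have h2 : M j j = ∑ l, N j l ^ 2 := by
    rw [← hNsq, Matrix.mul_apply]
    refine Finset.sum_congr rfl fun l _ => ?_
    have : N l j = N j l := congrFun (congrFun hNsymm j) l
    rw [this, sq]
  have h3 : (Cᵀ * M * C) j j = ∑ l, ((N * C) l j) ^ 2 := by
    have : Cᵀ * M * C = (N * C)ᵀ * (N * C) := by
      rw [Matrix.transpose_mul, hNsymm, ← hNsq]
      noncomm_ring
    rw [this, Matrix.mul_apply]
    refine Finset.sum_congr rfl fun l _ => ?_
    rw [Matrix.transpose_apply, sq]
  rw [h1, h2, h3]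
  exact Finset.sum_mul_sq_le_sq_mul_sq _ _ _

lemma aux_diag_nonneg {M : Matrix (Fin n) (Fin n) ℝ} (hM : M.PosSemidef) (j : Fin n) :
    0 ≤ M j j := by
  have hNsq : CFC.sqrt M * CFC.sqrt M = M := CFC.sqrt_mul_sqrt_self M hM.nonneg
  have hNsymm : (CFC.sqrt M)ᵀ = CFC.sqrt M := aux_symm (CFC.sqrt_nonneg M).posSemidef
  rw [← hNsq, Matrix.mul_apply]
  refine Finset.sum_nonneg fun l _ => ?_
  have : CFC.sqrt M l j = CFC.sqrt M j l := congrFun (congrFun hNsymm j) l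
  rw [this]
  exact mul_self_nonneg _

/-- Key: for PSD `B`, `(B j j)^k ≤ (B^k) j j`. -/
lemma aux_diag_pow {B : Matrix (Fin n) (Fin n) ℝ} (hB : B.PosSemidef) (j : Fin n) (k : ℕ) :
    (B j j) ^ k ≤ (B ^ k) j j := by
  have hBsymm : Bᵀ = B := aux_symm hB
  have hnn : ∀ m, 0 ≤ (B ^ m) j j := fun m => aux_diag_nonneg (hB.pow m) j
  have hcs : ∀ m : ℕ, ((B ^ (m + 1)) j j) ^ 2 ≤ (B ^ m) j j * (B ^ (m + 2)) j j := by
    intro m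
    have h := aux_cs (hB.pow m) B j
    have e1 : B ^ m * B = B ^ (m + 1) := (pow_succ B m).symm
    have e2 : Bᵀ * B ^ m * B = B ^ (m + 2) := by
      rw [hBsymm]
      rw [show B * B ^ m = B ^ (m + 1) from (pow_succ' B m).symm, ← pow_succ]
    rw [e1, e2] at h
    exact h
  rcases eq_or_lt_of_le (aux_diag_nonneg hB j) with h0 | h0
  · -- B j j = 0
    rcases Nat.eq_zero_or_pos k with rfl | hk
    · simp
    · calc (B j j) ^ k = 0 := by rw [← h0, zero_pow (by omega)]
        _ ≤ (B ^ k) j j := hnn k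
  · -- B j j > 0 : joint induction
    have key : ∀ m : ℕ, 0 < (B ^ m) j j ∧ B j j * (B ^ m) j j ≤ (B ^ (m + 1)) j j := by
      intro m
      induction m with
      | zero => simp [Matrix.one_apply_eq, h0, le_of_eq]
      | succ m ih =>
        obtain ⟨hpos, hstep⟩ := ih
        have hpos' : 0 < (B ^ (m + 1)) j j :=
          lt_of_lt_of_le (mul_pos h0 hpos) hstep
        refine ⟨hpos', ?_⟩
        have hcs' := hcs m
        -- B jj * (B^(m+1)) ≤ (B^(m+2)):
        -- (B^(m+1))^2 ≤ (B^m)(B^(m+2)) and B jj * (B^m) ≤ (B^(m+1))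
        nlinarith [hnn (m + 2), mul_pos h0 hpos]
    induction k with
    | zero => simp
    | succ m ih =>
      calc (B j j) ^ (m + 1) = B j j * (B j j) ^ m := by ring
        _ ≤ B j j * (B ^ m) j j := mul_le_mul_of_nonneg_left ih (le_of_lt h0)
        _ ≤ (B ^ (m + 1)) j j := (key m).2

end aux

/-- Entrywise ℓ_{2α} norm is bounded by Tr[(AᵀA)^α] (the Schatten 2α-norm). -/
theorem entrywise_le_schatten (r s α : ℕ) (hα : 1 ≤ α)
    (A : Matrix (Fin r) (Fin s) ℝ) :
    ∑ i : Fin r, ∑ j : Fin s, |A i j| ^ (2 * α) ≤ ((Aᵀ * A) ^ α).trace := by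
  have hB : (Aᵀ * A).PosSemidef := by
    have := Matrix.posSemidef_conjTranspose_mul_self A
    rwa [conjTranspose_eq_transpose_of_trivial] at this
  rw [Finset.sum_comm]
  rw [Matrix.trace]
  refine Finset.sum_le_sum fun j _ => ?_
  have hdiag : (Aᵀ * A) j j = ∑ i, (A i j) ^ 2 := by
    rw [Matrix.mul_apply]
    exact Finset.sum_congr rfl fun i _ => by rw [Matrix.transpose_apply, sq]
  calc ∑ i, |A i j| ^ (2 * α) = ∑ i, ((A i j) ^ 2) ^ α := by
        refine Finset.sum_congr rfl fun i _ => ?_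
        rw [pow_mul, sq_abs]
    _ ≤ (∑ i, (A i j) ^ 2) ^ α := aux_sum_pow_le _ (fun i => sq_nonneg _) hα
    _ = ((Aᵀ * A) j j) ^ α := by rw [hdiag]
    _ ≤ ((Aᵀ * A) ^ α) j j := aux_diag_pow hB j α
    _ = ((Aᵀ * A) ^ α).diag j := rfl
end

section
/- Let M be a real symmetric positive semidefinite s×s matrix and let α ≥ 1 be a natural number. Then the sum of the α-th powers of the diagonal entries of M is bounded by the trace of the α-th matrix power: ∑_{j=1}^{s} (M_{jj})^{α} ≤ Tr(M^{α}). -/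
open Matrix BigOperators

/-- For a real symmetric positive semidefinite matrix M and α ≥ 1,
∑_j (M_{jj})^α ≤ Tr(M^α). -/
theorem diag_pow_sum_le_trace_pow (s α : ℕ) (hα : 1 ≤ α)
    (M : Matrix (Fin s) (Fin s) ℝ) (hM : M.PosSemidef) :
    ∑ j : Fin s, (M j j) ^ α ≤ (M ^ α).trace := by
  classical
  have hH := hM.1
  set U : Matrix (Fin s) (Fin s) ℝ := (hH.eigenvectorUnitary : Matrix (Fin s) (Fin s) ℝ) with hUdef
  set d : Fin s → ℝ := hH.eigenvalues with hddef
  have hspec : M = U * diagonal d * star U := by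
    simpa using hH.spectral_theorem
  have hsUU : star U * U = 1 := Unitary.coe_star_mul_self hH.eigenvectorUnitary
  have hUUs : U * star U = 1 := Unitary.coe_mul_star_self hH.eigenvectorUnitary
  -- powers
  have hpow : ∀ n : ℕ, M ^ n = U * (diagonal fun i => d i ^ n) * star U := by
    intro n
    induction n with
    | zero => simp [hUUs]
    | succ n ih =>
      rw [pow_succ, ih, hspec]
      calc U * diagonal (fun i => d i ^ n) * star U * (U * diagonal d * star U)
          = U * (diagonal (fun i => d i ^ n) * (star U * U) * diagonal d) * star U := by
            noncomm_ring
        _ = U * (diagonal fun i => d i ^ (n + 1)) * star U := by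
            rw [hsUU, mul_one, diagonal_mul_diagonal]
            simp [pow_succ]
  -- trace of M^α
  have htr : (M ^ α).trace = ∑ k, d k ^ α := by
    rw [hpow α, Matrix.trace_mul_cycle, hsUU, one_mul, trace_diagonal]
  rw [htr]
  -- diagonal entries as convex combinations
  have hdiag : ∀ j, M j j = ∑ k, (U j k * U j k) * d k := by
    intro j
    rw [hspec]
    simp [Matrix.mul_apply, diagonal, star_apply]
    exact Finset.sum_congr rfl fun k _ => by ring
  have hrow : ∀ j, ∑ k, U j k * U j k = 1 := by
    intro j
    have := congrArg (fun A => A j j) hUUs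
    simpa [Matrix.mul_apply, star_apply] using this
  have hcol : ∀ k, ∑ j, U j k * U j k = 1 := by
    intro k
    have := congrArg (fun A => A k k) hsUU
    simpa [Matrix.mul_apply, star_apply] using this
  have step : ∀ j, (M j j) ^ α ≤ ∑ k, (U j k * U j k) * d k ^ α := by
    intro j
    rw [hdiag j]
    exact Real.pow_arith_mean_le_arith_mean_pow Finset.univ _ _
      (fun k _ => mul_self_nonneg _) (hrow j) (fun k _ => hM.eigenvalues_nonneg k) α
  calc ∑ j, (M j j) ^ α ≤ ∑ j, ∑ k, (U j k * U j k) * d k ^ α :=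
        Finset.sum_le_sum fun j _ => step j
    _ = ∑ k, (∑ j, U j k * U j k) * d k ^ α := by
        rw [Finset.sum_comm]
        exact Finset.sum_congr rfl fun k _ => by rw [Finset.sum_mul]
    _ = ∑ k, d k ^ α := by
        exact Finset.sum_congr rfl fun k _ => by rw [hcol k, one_mul]
end

section
/- Let ν, μ be real numbers with ν² + μ² = 1, and let Γ be the 4×4 real matrix with rows (0, ν, μ, 0), (−ν, 0, 0, μ), (−μ, 0, 0, −ν), (0, −μ, ν, 0). Then for every natural number α ≥ 1, the sum over all 16 subsets I ⊆ {1,2,3,4} of the α-th powers of the absolute values of the principal minors of Γ satisfies ∑_{I ⊆ {1,2,3,4}} |det(Γ|_I)|^{α} = 2(1 + ν^{2α} + μ^{2α}). -/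
open Matrix BigOperators

/-- The principal minor of `A` indexed by the subset `I`. -/
def principalMinor {n : ℕ} (A : Matrix (Fin n) (Fin n) ℝ) (I : Finset (Fin n)) : ℝ :=
  (A.submatrix (fun i : I => (i : Fin n)) (fun j : I => (j : Fin n))).det

lemma pm_empty {n : ℕ} (A : Matrix (Fin n) (Fin n) ℝ) : principalMinor A ∅ = 1 := by
  have : IsEmpty ((∅ : Finset (Fin n)) : Type) := by
    simp [Finset.isEmpty_coe_sort]
    exact ⟨fun x => x.2⟩
  exact Matrix.det_isEmpty

lemma pm_one {n : ℕ} (A : Matrix (Fin n) (Fin n) ℝ) (a : Fin n) :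
    principalMinor A {a} = A a a := by
  unfold principalMinor
  let e : Fin 1 ≃ ({a} : Finset (Fin n)) :=
    { toFun := fun _ => ⟨a, by simp⟩
      invFun := fun _ => 0
      left_inv := fun i => Subsingleton.elim _ _
      right_inv := fun x => Subtype.ext (by
        have h := Finset.mem_singleton.mp x.2; simp [h]) }
  rw [← Matrix.det_submatrix_equiv_self e]
  exact Matrix.det_fin_one _

lemma pm_two {n : ℕ} (A : Matrix (Fin n) (Fin n) ℝ) (a b : Fin n) (hab : a ≠ b) :
    principalMinor A {a, b} = A a a * A b b - A a b * A b a := by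
  unfold principalMinor
  let e : Fin 2 ≃ ({a, b} : Finset (Fin n)) :=
    { toFun := fun i => if i = 0 then ⟨a, by simp⟩ else ⟨b, by simp⟩
      invFun := fun x => if (x : Fin n) = a then 0 else 1
      left_inv := fun i => by
        fin_cases i <;> simp [hab.symm]
      right_inv := fun x => by
        have h := x.2
        rw [Finset.mem_insert, Finset.mem_singleton] at h
        rcases h with h | h
        · exact Subtype.ext (by simp [h])
        · exact Subtype.ext (by simp [h, hab.symm]) }
  rw [← Matrix.det_submatrix_equiv_self e, Matrix.det_fin_two]
  simp [e]

lemma pm_three {n : ℕ} (A : Matrix (Fin n) (Fin n) ℝ) (a b c : Fin n)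
    (hab : a ≠ b) (hac : a ≠ c) (hbc : b ≠ c) :
    principalMinor A {a, b, c} =
      A a a * A b b * A c c - A a a * A b c * A c b - A a b * A b a * A c c
        + A a b * A b c * A c a + A a c * A b a * A c b - A a c * A b b * A c a := by
  unfold principalMinor
  let e : Fin 3 ≃ ({a, b, c} : Finset (Fin n)) :=
    { toFun := fun i => if i = 0 then ⟨a, by simp⟩ else if i = 1 then ⟨b, by simp⟩ else ⟨c, by simp⟩
      invFun := fun x => if (x : Fin n) = a then 0 else if (x : Fin n) = b then 1 else 2
      left_inv := fun i => by
        fin_cases i <;> simp [hab.symm, hac.symm, hbc.symm]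
      right_inv := fun x => by
        have h := x.2
        rw [Finset.mem_insert, Finset.mem_insert, Finset.mem_singleton] at h
        rcases h with h | h | h
        · exact Subtype.ext (by simp [h])
        · exact Subtype.ext (by simp [h, hab.symm])
        · exact Subtype.ext (by simp [h, hac.symm, hbc.symm]) }
  rw [← Matrix.det_submatrix_equiv_self e, Matrix.det_fin_three]
  simp [e]

lemma pm_univ {n : ℕ} (A : Matrix (Fin n) (Fin n) ℝ) :
    principalMinor A Finset.univ = A.det := by
  unfold principalMinor
  let e : Fin n ≃ (Finset.univ : Finset (Fin n)) :=
    (Equiv.subtypeUnivEquiv (fun x => Finset.mem_univ x)).symm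
  rw [← Matrix.det_submatrix_equiv_self e]
  rfl

/-- For the canonical 4×4 covariance block of one entangled fermionic mode pair,
the sum over all principal minors of the α-th powers of their absolute values is
2(1 + ν^{2α} + μ^{2α}). -/
theorem sum_abs_principalMinor_pow_canonicalBlock (ν μ : ℝ) (hνμ : ν ^ 2 + μ ^ 2 = 1)
    (α : ℕ) (hα : 1 ≤ α) :
    ∑ I : Finset (Fin 4),
        |principalMinor !![0, ν, μ, 0; -ν, 0, 0, μ; -μ, 0, 0, -ν; 0, -μ, ν, 0] I| ^ α
      = 2 * (1 + ν ^ (2 * α) + μ ^ (2 * α)) := by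
  set A := !![0, ν, μ, 0; -ν, 0, 0, μ; -μ, 0, 0, -ν; 0, -μ, ν, 0] with hA
  have hdet : A.det = (ν ^ 2 + μ ^ 2) ^ 2 := by
    rw [hA]
    simp [Matrix.det_succ_row_zero, Fin.sum_univ_succ, Fin.succAbove, -Matrix.cons_val']
    ring
  have huniv : (Finset.univ : Finset (Finset (Fin 4))) =
      {∅, {0}, {1}, {2}, {3}, {0,1}, {0,2}, {0,3}, {1,2}, {1,3}, {2,3},
       {0,1,2}, {0,1,3}, {0,2,3}, {1,2,3}, {0,1,2,3}} := by decide
  have hfull : ({0,1,2,3} : Finset (Fin 4)) = Finset.univ := by decide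
  rw [huniv]
  repeat rw [Finset.sum_insert (by decide)]
  rw [Finset.sum_singleton, hfull]
  rw [pm_empty, pm_one, pm_one, pm_one, pm_one,
    pm_two A 0 1 (by decide), pm_two A 0 2 (by decide), pm_two A 0 3 (by decide),
    pm_two A 1 2 (by decide), pm_two A 1 3 (by decide), pm_two A 2 3 (by decide),
    pm_three A 0 1 2 (by decide) (by decide) (by decide),
    pm_three A 0 1 3 (by decide) (by decide) (by decide),
    pm_three A 0 2 3 (by decide) (by decide) (by decide),
    pm_three A 1 2 3 (by decide) (by decide) (by decide),
    pm_univ, hdet, hνμ]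
  rw [hA]
  norm_num [Matrix.cons_val_three, Matrix.cons_val_two, -Matrix.cons_val']
  have h0 : (0:ℝ) ^ α = 0 := zero_pow (Nat.one_le_iff_ne_zero.mp hα)
  have hν : (ν * ν) ^ α = ν ^ (2 * α) := by rw [← sq, ← pow_mul]
  have hμ : (μ * μ) ^ α = μ ^ (2 * α) := by rw [← sq, ← pow_mul]
  rw [h0, hν, hμ]
  ring
end

section
/- Let φ be a real number and let ψ ∈ ℂ⁴ be the two-qubit vector ψ = (cos φ, 0, 0, i·sin φ) in the basis |00⟩, |01⟩, |10⟩, |11⟩. Let σ₀ = [[1,0],[0,1]], σ₁ = [[0,1],[1,0]], σ₂ = [[0,−i],[i,0]], σ₃ = [[1,0],[0,−1]] be the 2×2 Pauli matrices. Then for every natural number α ≥ 1, ∑_{a=0}^{3} ∑_{b=0}^{3} |⟨ψ, (σ_a ⊗ σ_b) ψ⟩|^{2α} = 2(1 + cos(2φ)^{2α} + sin(2φ)^{2α}), where ⊗ is the Kronecker product and ⟨·,·⟩ the standard Hermitian inner product on ℂ⁴. -/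
open Matrix Kronecker BigOperators

/-- The four Pauli matrices σ₀, σ₁, σ₂, σ₃. -/
def pauli : Fin 4 → Matrix (Fin 2) (Fin 2) ℂ :=
  ![!![1, 0; 0, 1], !![0, 1; 1, 0], !![0, -Complex.I; Complex.I, 0], !![1, 0; 0, -1]]

/-- The two-qubit state ψ = cos(φ)|00⟩ + i·sin(φ)|11⟩. -/
noncomputable def pairState (φ : ℝ) : Fin 2 × Fin 2 → ℂ := fun p =>
  if p = (0, 0) then (Real.cos φ : ℂ)
  else if p = (1, 1) then Complex.I * (Real.sin φ : ℂ)
  else 0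

/-- The Pauli-string expectation values of `pairState φ`. -/
lemma pauli_string_expectation (φ : ℝ) : ∀ a b : Fin 4,
    star (pairState φ) ⬝ᵥ ((pauli a ⊗ₖ pauli b).mulVec (pairState φ)) =
    ![![1, 0, 0, (Real.cos (2*φ) : ℂ)],
      ![0, 0, (Real.sin (2*φ) : ℂ), 0],
      ![0, (Real.sin (2*φ) : ℂ), 0, 0],
      ![(Real.cos (2*φ) : ℂ), 0, 0, 1]] a b := by
  have h1 : (Real.sin φ : ℂ) ^ 2 + (Real.cos φ : ℂ) ^ 2 = 1 := by
    exact_mod_cast congrArg (Complex.ofReal ·) (Real.sin_sq_add_cos_sq φ)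
  have hc : (Real.cos (2*φ) : ℂ) = (Real.cos φ : ℂ) ^ 2 - (Real.sin φ : ℂ) ^ 2 := by
    have : Real.cos (2*φ) = Real.cos φ ^ 2 - Real.sin φ ^ 2 := by
      have := Real.sin_sq_add_cos_sq φ; rw [Real.cos_two_mul]; nlinarith
    exact_mod_cast congrArg (Complex.ofReal ·) this
  have hs : (Real.sin (2*φ) : ℂ) = 2 * (Real.sin φ : ℂ) * (Real.cos φ : ℂ) := by
    exact_mod_cast congrArg (Complex.ofReal ·) (Real.sin_two_mul φ)
  intro a b
  fin_cases a <;> fin_cases b <;>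
    simp [pairState, pauli, Matrix.mulVec, dotProduct, Fintype.sum_prod_type,
      Fin.sum_univ_two, kroneckerMap_apply, Prod.ext_iff, Matrix.vecHead, Matrix.vecTail,
      -Complex.ofReal_cos, -Complex.ofReal_sin, Complex.conj_ofReal] <;>
    first
      | linear_combination h1 - (Real.sin φ : ℂ) ^ 2 * Complex.I_sq
      | linear_combination (Real.sin φ : ℂ) ^ 2 * Complex.I_sq - hc
      | linear_combination -hs - 2 * (Real.cos φ : ℂ) * (Real.sin φ : ℂ) * Complex.I_sq
      | ring

/-- For ψ = cos(φ)|00⟩ + i sin(φ)|11⟩ and α ≥ 1, the sum over all two-qubit Pauli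
strings of |⟨ψ, (σ_a ⊗ σ_b) ψ⟩|^{2α} equals 2(1 + cos(2φ)^{2α} + sin(2φ)^{2α}). -/
theorem pauli_string_moment (φ : ℝ) (α : ℕ) (hα : 1 ≤ α) :
    ∑ a : Fin 4, ∑ b : Fin 4,
        ‖star (pairState φ) ⬝ᵥ ((pauli a ⊗ₖ pauli b).mulVec (pairState φ))‖
          ^ (2 * α)
      = 2 * (1 + Real.cos (2 * φ) ^ (2 * α) + Real.sin (2 * φ) ^ (2 * α)) := by
  have k := pauli_string_expectation φ
  have e0 : (0:ℝ) ^ (2*α) = 0 := zero_pow (by omega)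
  have habs : ∀ r : ℝ, |r| ^ (2*α) = r ^ (2*α) := fun r => by
    rw [pow_mul, sq_abs, ← pow_mul]
  simp only [Fin.sum_univ_four, k, Matrix.cons_val_zero, Matrix.cons_val_one,
    Matrix.head_cons, Matrix.cons_val_two, Matrix.tail_cons, Matrix.cons_val_three,
    map_zero, _root_.map_one, norm_zero, norm_one, Complex.norm_real, Real.norm_eq_abs, e0, habs, one_pow]
  ring
end

section
/- The definite integral ∫₀¹ log(1 − x + x²) / √(x(1 − x)) dx equals −2π·log(8 − 4√3). Equivalently, −(1/(2π)) ∫₀¹ log(1 − x + x²)/√(x(1−x)) dx = log(8 − 4√3), which is the thermodynamic nonlocal-magic density 𝒥(1/2) of the Gaussian Haar ensemble at the symmetric bipartition. -/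
open Real intervalIntegral MeasureTheory Set

noncomputable def Lb (b : ℝ) : ℝ := ∫ u in (0:ℝ)..π, Real.log (1 - 2*b*Real.cos u + b^2)

lemma quad_pos {b : ℝ} (hb : |b| < 1) (u : ℝ) : 0 < 1 - 2*b*Real.cos u + b^2 := by
  have h1 : b * Real.cos u ≤ |b| := by
    calc b * Real.cos u ≤ |b * Real.cos u| := le_abs_self _
    _ = |b| * |Real.cos u| := abs_mul _ _
    _ ≤ |b| * 1 := by
        have := Real.abs_cos_le_one u
        nlinarith [abs_nonneg b]
    _ = |b| := mul_one _
  nlinarith [sq_abs b, abs_nonneg b]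

lemma Lb_cont {b : ℝ} (hb : |b| < 1) :
    Continuous (fun u => Real.log (1 - 2*b*Real.cos u + b^2)) := by
  apply Continuous.log
  · continuity
  · exact fun u => (quad_pos hb u).ne'

lemma Lb_neg (b : ℝ) : Lb (-b) = Lb b := by
  unfold Lb
  have := intervalIntegral.integral_comp_sub_left
    (fun u => Real.log (1 - 2*b*Real.cos u + b^2)) π (a := 0) (b := π)
  simp only [sub_zero, sub_self] at this
  rw [← this]
  congr 1
  ext u
  rw [Real.cos_pi_sub]
  ring_nf
lemma Lb_sq {b : ℝ} (hb : |b| < 1) : Lb (b^2) = 2 * Lb b := by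
  have hb2 : |b^2| < 1 := by rw [abs_pow]; calc |b|^2 ≤ |b| := by nlinarith [abs_nonneg b]
                                                  _ < 1 := hb
  -- step 1: Lb b + Lb (-b) = ∫_0^π log(1 - 2 b² cos(2u) + b⁴)
  have key : Lb b + Lb (-b) = ∫ u in (0:ℝ)..π, Real.log (1 - 2*(b^2)*Real.cos (2*u) + (b^2)^2) := by
    unfold Lb
    rw [← intervalIntegral.integral_add ((Lb_cont hb).intervalIntegrable _ _)
      (by simpa using (Lb_cont (by simpa using hb : |(-b)| < 1)).intervalIntegrable 0 π)]
    apply intervalIntegral.integral_congr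
    intro u _
    simp only
    rw [← Real.log_mul (quad_pos hb u).ne' (by simpa using (quad_pos (by simpa using hb : |(-b)| < 1) u).ne')]
    congr 1
    have := Real.cos_two_mul u
    nlinarith [this]
  -- step 2: substitute v = 2u
  have sub2 : (∫ u in (0:ℝ)..π, Real.log (1 - 2*(b^2)*Real.cos (2*u) + (b^2)^2))
      = (2:ℝ)⁻¹ * ∫ v in (0:ℝ)..(2*π), Real.log (1 - 2*(b^2)*Real.cos v + (b^2)^2) := by
    have := intervalIntegral.integral_comp_mul_left
      (fun v => Real.log (1 - 2*(b^2)*Real.cos v + (b^2)^2)) (two_ne_zero) (a := 0) (b := π)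
    simp only [mul_zero] at this
    rw [this]; simp
  -- step 3: split and shift
  have split : (∫ v in (0:ℝ)..(2*π), Real.log (1 - 2*(b^2)*Real.cos v + (b^2)^2))
      = 2 * Lb (b^2) := by
    have hi1 := (Lb_cont hb2).intervalIntegrable (μ := volume) 0 π
    have hi2 := (Lb_cont hb2).intervalIntegrable (μ := volume) π (2*π)
    rw [← intervalIntegral.integral_add_adjacent_intervals hi1 hi2]
    have shift : (∫ v in π..(2*π), Real.log (1 - 2*(b^2)*Real.cos v + (b^2)^2))
        = Lb (-(b^2)) := by
      have := intervalIntegral.integral_comp_add_right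
        (fun v => Real.log (1 - 2*(b^2)*Real.cos v + (b^2)^2)) π (a := 0) (b := π)
      rw [zero_add] at this
      rw [← (by ring : π + π = 2*π), ← this]
      unfold Lb
      apply intervalIntegral.integral_congr
      intro u _
      simp only [Real.cos_add_pi]
      ring_nf
    rw [shift, Lb_neg]
    unfold Lb; ring
  have h : Lb b + Lb (-b) = Lb (b^2) := by
    rw [key, sub2, split]; ring
  rw [Lb_neg] at h
  linarith
lemma Lb_bound {b : ℝ} (hb : |b| < 1) : |Lb b| ≤ (-2 * Real.log (1 - |b|)) * π := by
  have hb0 : 0 ≤ |b| := abs_nonneg b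
  have h1b : 0 < 1 - |b| := by linarith
  have hbd : ∀ u ∈ Set.uIoc (0:ℝ) π, ‖Real.log (1 - 2*b*Real.cos u + b^2)‖ ≤ -2 * Real.log (1 - |b|) := by
    intro u _
    have hpos := quad_pos hb u
    have habs : |b * Real.cos u| ≤ |b| := by
      rw [abs_mul]
      nlinarith [Real.abs_cos_le_one u, abs_nonneg (Real.cos u)]
    have habs' := abs_le.1 habs
    have hup : 1 - 2*b*Real.cos u + b^2 ≤ (1+|b|)^2 := by nlinarith [sq_abs b]
    have hlo : (1-|b|)^2 ≤ 1 - 2*b*Real.cos u + b^2 := by nlinarith [sq_abs b]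
    rw [Real.norm_eq_abs, abs_le]
    have hlog1 : Real.log ((1-|b|)^2) ≤ Real.log (1 - 2*b*Real.cos u + b^2) :=
      Real.log_le_log (by positivity) hlo
    have hlog2 : Real.log (1 - 2*b*Real.cos u + b^2) ≤ Real.log ((1+|b|)^2) :=
      Real.log_le_log hpos hup
    rw [Real.log_pow] at hlog1 hlog2
    push_cast at hlog1 hlog2
    have h3 : Real.log (1 + |b|) ≤ -Real.log (1 - |b|) := by
      have h4 : Real.log ((1 + |b|) * (1 - |b|)) ≤ 0 :=
        Real.log_nonpos (by nlinarith) (by nlinarith)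
      rw [Real.log_mul (by positivity) (by positivity)] at h4
      linarith
    constructor <;> linarith
  have h := intervalIntegral.norm_integral_le_of_norm_le_const hbd
  unfold Lb
  rwa [Real.norm_eq_abs, sub_zero, abs_of_nonneg Real.pi_nonneg] at h

lemma Lb_zero {b : ℝ} (hb0 : 0 ≤ b) (hb : b < 1) : Lb b = 0 := by
  have key : ∀ n : ℕ, Lb (b^(2^n)) = 2^n * Lb b := by
    intro n
    induction n with
    | zero => simp
    | succ n ih =>
      have hpow : |b ^ (2^n)| < 1 := by
        rw [abs_pow, abs_of_nonneg hb0]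
        exact pow_lt_one₀ hb0 hb (by positivity)
      have h2 := Lb_sq hpow
      rw [← pow_mul, ← pow_succ] at h2
      rw [h2, ih, pow_succ]
      ring
  have hbn : ∀ n : ℕ, b ^ (2^n) ≤ b := by
    intro n
    calc b ^ (2^n) ≤ b ^ 1 := pow_le_pow_of_le_one hb0 hb.le (Nat.one_le_two_pow)
    _ = b := pow_one b
  have hC : ∀ n : ℕ, (2:ℝ)^n * |Lb b| ≤ (-2 * Real.log (1 - b)) * π := by
    intro n
    have hpow : |b ^ (2^n)| < 1 := by
      rw [abs_pow, abs_of_nonneg hb0]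
      exact pow_lt_one₀ hb0 hb (by positivity)
    have hbd := Lb_bound hpow
    rw [key n, abs_mul, abs_pow, abs_of_nonneg (by norm_num : (0:ℝ) ≤ 2)] at hbd
    have hmon : Real.log (1 - b) ≤ Real.log (1 - |b ^ (2^n)|) := by
      apply Real.log_le_log (by linarith)
      rw [abs_pow, abs_of_nonneg hb0]
      linarith [hbn n]
    have : (-2 * Real.log (1 - |b ^ (2^n)|)) * π ≤ (-2 * Real.log (1 - b)) * π := by
      nlinarith [Real.pi_nonneg]
    linarith
  by_contra h
  have hpos : 0 < |Lb b| := abs_pos.2 h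
  obtain ⟨n, hn⟩ := pow_unbounded_of_one_lt (((-2 * Real.log (1 - b)) * π) / |Lb b|) one_lt_two
  have := hC n
  rw [div_lt_iff₀ hpos] at hn
  linarith
lemma Lb_double {c : ℝ} (hc : |c| < 1) :
    (∫ u in (0:ℝ)..π, Real.log (1 - 2*c*Real.cos (2*u) + c^2)) = Lb c := by
  have sub2 : (∫ u in (0:ℝ)..π, Real.log (1 - 2*c*Real.cos (2*u) + c^2))
      = (2:ℝ)⁻¹ * ∫ v in (0:ℝ)..(2*π), Real.log (1 - 2*c*Real.cos v + c^2) := by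
    have := intervalIntegral.integral_comp_mul_left
      (fun v => Real.log (1 - 2*c*Real.cos v + c^2)) (two_ne_zero) (a := 0) (b := π)
    simp only [mul_zero] at this
    rw [this]; simp
  have hi1 := (Lb_cont hc).intervalIntegrable (μ := volume) 0 π
  have hi2 := (Lb_cont hc).intervalIntegrable (μ := volume) π (2*π)
  have split : (∫ v in (0:ℝ)..(2*π), Real.log (1 - 2*c*Real.cos v + c^2))
      = 2 * Lb c := by
    rw [← intervalIntegral.integral_add_adjacent_intervals hi1 hi2]
    have shift : (∫ v in π..(2*π), Real.log (1 - 2*c*Real.cos v + c^2)) = Lb (-c) := by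
      have := intervalIntegral.integral_comp_add_right
        (fun v => Real.log (1 - 2*c*Real.cos v + c^2)) π (a := 0) (b := π)
      rw [zero_add] at this
      rw [← (by ring : π + π = 2*π), ← this]
      unfold Lb
      apply intervalIntegral.integral_congr
      intro u _
      simp only [Real.cos_add_pi]
      ring_nf
    rw [shift, Lb_neg]
    unfold Lb; ring
  rw [sub2, split]; ring

lemma sqrt3_lt : Real.sqrt 3 < 7/4 := by
  nlinarith [Real.sq_sqrt (by norm_num : (3:ℝ) ≥ 0), Real.sqrt_nonneg 3]

lemma sqrt3_gt : (3/2 : ℝ) < Real.sqrt 3 := by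
  nlinarith [Real.sq_sqrt (by norm_num : (3:ℝ) ≥ 0), Real.sqrt_nonneg 3]

lemma theta_integral :
    (∫ θ in (0:ℝ)..π, Real.log ((3 + Real.cos θ^2)/4))
      = -2 * π * Real.log (8 - 4 * Real.sqrt 3) := by
  set s := Real.sqrt 3 with hs
  have hs2 : s^2 = 3 := Real.sq_sqrt (by norm_num)
  have hsl := sqrt3_lt
  have hsg := sqrt3_gt
  set b : ℝ := 7 - 4*s with hbdef
  have hb0 : 0 < b := by simp only [hbdef]; linarith
  have hb1 : b < 1 := by simp only [hbdef]; linarith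
  have hab : |(-b)| < 1 := by rw [abs_neg, abs_of_pos hb0]; exact hb1
  have hbsq : b^2 = 14*b - 1 := by simp only [hbdef]; nlinarith
  -- pointwise rewrite
  have hpt : ∀ θ : ℝ, Real.log ((3 + Real.cos θ^2)/4)
      = Real.log (1 - 2*(-b)*Real.cos (2*θ) + (-b)^2) - Real.log (16*b) := by
    intro θ
    rw [← Real.log_div (quad_pos hab (2*θ)).ne' (by positivity)]
    congr 1
    have hc := Real.cos_two_mul θ
    field_simp
    nlinarith [hc]
  have hconst : (∫ θ in (0:ℝ)..π, Real.log ((3 + Real.cos θ^2)/4))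
      = (∫ θ in (0:ℝ)..π, Real.log (1 - 2*(-b)*Real.cos (2*θ) + (-b)^2)) - π * Real.log (16*b) := by
    rw [intervalIntegral.integral_congr (g := fun θ =>
        Real.log (1 - 2*(-b)*Real.cos (2*θ) + (-b)^2) - Real.log (16*b))
        (fun θ _ => hpt θ)]
    rw [intervalIntegral.integral_sub]
    · rw [intervalIntegral.integral_const, smul_eq_mul, sub_zero]
    · exact ((Lb_cont hab).comp (by continuity)).intervalIntegrable 0 π
    · exact intervalIntegrable_const
  have hK : (∫ θ in (0:ℝ)..π, Real.log (1 - 2*(-b)*Real.cos (2*θ) + (-b)^2)) = 0 := by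
    rw [Lb_double hab, Lb_neg, Lb_zero hb0.le hb1]
  have h16 : Real.log (16*b) = 2 * Real.log (8 - 4*s) := by
    have : 16*b = (8 - 4*s)^2 := by simp only [hbdef]; nlinarith
    rw [this, Real.log_pow]
    push_cast; ring
  rw [hconst, hK, h16]
  ring
noncomputable def gfun (x : ℝ) : ℝ := Real.log (1 - x + x ^ 2) / Real.sqrt (x * (1 - x))

lemma gfun_meas : Measurable gfun := by
  apply Measurable.div
  · exact Real.measurable_log.comp (by fun_prop)
  · exact Real.continuous_sqrt.measurable.comp (by fun_prop)

lemma num_bound {x : ℝ} (h0 : 0 ≤ x) (h1 : x ≤ 1) :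
    |Real.log (1 - x + x ^ 2)| ≤ Real.log (4/3) := by
  have hq0 : (3:ℝ)/4 ≤ 1 - x + x ^ 2 := by nlinarith [sq_nonneg (x - 1/2)]
  have hq1 : 1 - x + x ^ 2 ≤ 1 := by nlinarith
  have hl1 : Real.log (1 - x + x ^ 2) ≤ 0 := Real.log_nonpos (by linarith) hq1
  have hl0 : Real.log (3/4) ≤ Real.log (1 - x + x ^ 2) :=
    Real.log_le_log (by norm_num) hq0
  have : Real.log (3/4) = - Real.log (4/3) := by
    rw [← Real.log_inv]; norm_num
  rw [abs_le]
  constructor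
  · linarith [hl0, this]
  · have : 0 ≤ Real.log (4/3) := Real.log_nonneg (by norm_num)
    linarith

lemma gfun_symm (x : ℝ) : gfun (1 - x) = gfun x := by
  unfold gfun
  ring_nf

lemma gfun_integrable_left : IntervalIntegrable gfun volume 0 (1/2) := by
  have hmaj : IntervalIntegrable (fun x : ℝ => Real.log (4/3) * Real.sqrt 2 * x ^ (-(1/2) : ℝ))
      volume 0 (1/2) :=
    (intervalIntegral.intervalIntegrable_rpow' (by norm_num)).const_mul _
  apply hmaj.mono_fun (gfun_meas.aestronglyMeasurable)
  apply MeasureTheory.ae_restrict_of_forall_mem measurableSet_uIoc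
  intro x hx
  rw [Set.uIoc_of_le (by norm_num : (0:ℝ) ≤ 1/2)] at hx
  obtain ⟨hx0, hx1⟩ := hx
  have hlog : |Real.log (1 - x + x ^ 2)| ≤ Real.log (4/3) := num_bound hx0.le (by linarith)
  have hsq : Real.sqrt (x/2) ≤ Real.sqrt (x * (1 - x)) :=
    Real.sqrt_le_sqrt (by nlinarith)
  have hsq0 : 0 < Real.sqrt (x/2) := Real.sqrt_pos.2 (by linarith)
  have hgb : |gfun x| ≤ Real.log (4/3) / Real.sqrt (x/2) := by
    unfold gfun
    rw [abs_div, abs_of_nonneg (Real.sqrt_nonneg _)]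
    exact div_le_div₀ (Real.log_nonneg (by norm_num)) hlog hsq0 hsq
  have heq : Real.log (4/3) / Real.sqrt (x/2)
      = Real.log (4/3) * Real.sqrt 2 * x ^ (-(1/2) : ℝ) := by
    rw [Real.sqrt_div hx0.le, Real.rpow_neg hx0.le, ← Real.sqrt_eq_rpow]
    have h2 : Real.sqrt 2 ≠ 0 := by positivity
    have hx' : Real.sqrt x ≠ 0 := by positivity
    field_simp
  simp only [Real.norm_eq_abs]
  calc |gfun x| ≤ Real.log (4/3) / Real.sqrt (x/2) := hgb
  _ = Real.log (4/3) * Real.sqrt 2 * x ^ (-(1/2) : ℝ) := heq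
  _ ≤ |Real.log (4/3) * Real.sqrt 2 * x ^ (-(1/2) : ℝ)| := le_abs_self _

lemma gfun_integrable : IntervalIntegrable gfun volume 0 1 := by
  have hleft := gfun_integrable_left
  have hright : IntervalIntegrable gfun volume (1/2) 1 := by
    have h1 := gfun_integrable_left.comp_sub_left 1
    simp only [gfun_symm] at h1
    norm_num at h1
    exact h1.symm
  exact hleft.trans hright
lemma comp_eq {θ : ℝ} (h : θ ∈ Set.Ioo 0 π) :
    gfun ((1 - Real.cos θ)/2) * (Real.sin θ / 2) = Real.log ((3 + Real.cos θ^2)/4) := by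
  have hs : 0 < Real.sin θ := Real.sin_pos_of_pos_of_lt_pi h.1 h.2
  unfold gfun
  have h1 : 1 - (1 - Real.cos θ)/2 + ((1 - Real.cos θ)/2)^2 = (3 + Real.cos θ^2)/4 := by ring
  have h2 : ((1 - Real.cos θ)/2) * (1 - (1 - Real.cos θ)/2) = (Real.sin θ/2)^2 := by
    nlinarith [Real.sin_sq_add_cos_sq θ]
  rw [h1, h2, Real.sqrt_sq (by linarith)]
  field_simp

lemma ae_ne_endpoints : ∀ᵐ θ : ℝ, θ ∉ ({0, π} : Set ℝ) := by
  have h : (volume : Measure ℝ) ({0, π} : Set ℝ) = 0 :=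
    (Set.toFinite _).measure_zero volume
  exact measure_eq_zero_iff_ae_notMem.mp h

/-- ∫₀¹ log(1 − x + x²)/√(x(1−x)) dx = −2π·log(8 − 4√3): the thermodynamic
nonlocal-magic density of the Gaussian Haar ensemble at the symmetric bipartition. -/
theorem arcsine_log_integral :
    ∫ x in (0 : ℝ)..1, Real.log (1 - x + x ^ 2) / Real.sqrt (x * (1 - x))
      = -2 * Real.pi * Real.log (8 - 4 * Real.sqrt 3) := by
  have hπ := Real.pi_pos
  set f : ℝ → ℝ := fun θ => (1 - Real.cos θ)/2 with hfdef
  set f' : ℝ → ℝ := fun θ => Real.sin θ / 2 with hf'def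
  have hmin : min (0:ℝ) π = 0 := min_eq_left hπ.le
  have hmax : max (0:ℝ) π = π := max_eq_right hπ.le
  have hIoo : ∀ θ ∈ Set.Ioo (0:ℝ) π, f θ ∈ Set.Ioo (0:ℝ) 1 := by
    intro θ hθ
    have hs : 0 < Real.sin θ := Real.sin_pos_of_pos_of_lt_pi hθ.1 hθ.2
    have := Real.sin_sq_add_cos_sq θ
    constructor
    · simp only [hfdef]; nlinarith
    · simp only [hfdef]; nlinarith
  have hsub : (∫ θ in (0:ℝ)..π, (gfun ∘ f) θ * f' θ) = ∫ u in (f 0)..(f π), gfun u := by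
    apply intervalIntegral.integral_comp_mul_deriv'''
    · exact (by continuity : Continuous f).continuousOn
    · rw [hmin, hmax]
      intro x hx
      have hd : HasDerivAt f (Real.sin x / 2) x := by
        have := ((Real.hasDerivAt_cos x).const_sub 1).div_const 2
        simpa [hfdef] using this
      exact hd.hasDerivWithinAt
    · rw [hmin, hmax]
      have gcont : ContinuousOn gfun (Set.Ioo 0 1) := by
        unfold gfun
        apply ContinuousOn.div
        · apply ContinuousOn.log (by fun_prop)
          intro x hx
          nlinarith [hx.1, hx.2, sq_nonneg (x - 1/2)]
        · fun_prop
        · intro x hx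
          exact Real.sqrt_ne_zero'.mpr (by nlinarith [hx.1, hx.2])
      apply gcont.mono
      rintro _ ⟨θ, hθ, rfl⟩
      exact hIoo θ hθ
    · apply MeasureTheory.IntegrableOn.mono_set
        (s := f '' Set.uIcc 0 π) (t := Set.Icc 0 1)
      · rw [← Set.uIcc_of_le (by norm_num : (0:ℝ) ≤ 1), ← intervalIntegrable_iff']
        exact gfun_integrable
      · rintro _ ⟨θ, _, rfl⟩
        constructor
        · simp only [hfdef]; nlinarith [Real.cos_le_one θ]
        · simp only [hfdef]; nlinarith [Real.neg_one_le_cos θ]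
    · have hcont : Continuous (fun θ => Real.log ((3 + Real.cos θ^2)/4)) := by
        apply Continuous.log (by continuity)
        intro θ
        nlinarith [sq_nonneg (Real.cos θ)]
      rw [← intervalIntegrable_iff']
      apply (hcont.intervalIntegrable 0 π).congr_ae
      filter_upwards [MeasureTheory.ae_restrict_mem measurableSet_uIoc,
        MeasureTheory.ae_restrict_of_ae ae_ne_endpoints] with θ hmem hne
      rw [Set.uIoc_of_le hπ.le] at hmem
      simp only [Set.mem_insert_iff, Set.mem_singleton_iff, not_or] at hne
      have hIoo' : θ ∈ Set.Ioo 0 π := ⟨hmem.1, lt_of_le_of_ne hmem.2 hne.2⟩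
      simpa [hfdef, hf'def, Function.comp] using (comp_eq hIoo').symm
  have hf0 : f 0 = 0 := by simp [hfdef]
  have hfπ : f π = 1 := by simp [hfdef]
  have hmain : (∫ θ in (0:ℝ)..π, (gfun ∘ f) θ * f' θ)
      = ∫ θ in (0:ℝ)..π, Real.log ((3 + Real.cos θ^2)/4) := by
    apply intervalIntegral.integral_congr_ae
    filter_upwards [ae_ne_endpoints] with θ hne hmem
    rw [Set.uIoc_of_le hπ.le] at hmem
    simp only [Set.mem_insert_iff, Set.mem_singleton_iff, not_or] at hne
    have hIoo' : θ ∈ Set.Ioo 0 π := ⟨hmem.1, lt_of_le_of_ne hmem.2 hne.2⟩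
    simpa [hfdef, hf'def, Function.comp] using comp_eq hIoo'
  calc (∫ x in (0:ℝ)..1, Real.log (1 - x + x ^ 2) / Real.sqrt (x * (1 - x)))
      = ∫ u in (f 0)..(f π), gfun u := by rw [hf0, hfπ]; rfl
  _ = ∫ θ in (0:ℝ)..π, (gfun ∘ f) θ * f' θ := hsub.symm
  _ = ∫ θ in (0:ℝ)..π, Real.log ((3 + Real.cos θ^2)/4) := hmain
  _ = -2 * Real.pi * Real.log (8 - 4 * Real.sqrt 3) := theta_integral
end
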